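/- arXiv:2411.12912 — 4 statements merged into one kernel-verified Lean document; each statement's English description precedes it below -/
import Mathlib

section
/- Let (A, A⁺, A⁻) be a Reedy algebra with complete set E = {e₀, …, eₙ} of pairwise orthogonal idempotents. Then for i ≠ j, the left A⁺-modules A⁺eᵢ and A⁺eⱼ are indecomposable and non-isomorphic; in particular A⁺ is an elementary algebra (A⁺/rad(A⁺) is a product of copies of k) with E a complete set of primitive pairwise orthogonal idempotents. -/
open scoped TensorProduct DirectSum

/-- The corner subspace `f·S·e` of an algebra `A`, for `S ⊆ A`. -/
def cornerSpace (k : Type*) [Field k] {A : Type*} [Ring A] [Algebra k A]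
    (f e : A) (S : Set A) : Submodule k A :=
  Submodule.span k {x | ∃ a ∈ S, x = f * a * e}

/-- Multiplication, as a linear map on the tensor product of two subspaces of an algebra. -/
noncomputable def mulTensor (k : Type*) [Field k] {A : Type*} [Ring A] [Algebra k A]
    (M N : Submodule k A) : (M ⊗[k] N) →ₗ[k] A :=
  TensorProduct.lift ((LinearMap.mul k A).domRestrict₁₂ M N)

/-- The multiplication map `⊕_l (e_j·P·e_l) ⊗ (e_l·M·e_i) → A`. -/
noncomputable def reedyMulMap (k : Type*) [Field k] {A : Type*} [Ring A] [Algebra k A]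
    {ι : Type*} [Fintype ι] [DecidableEq ι]
    (e : ι → A) (P M : Set A) (j i : ι) :
    (⨁ l : ι, (↥(cornerSpace k (e j) (e l) P) ⊗[k] ↥(cornerSpace k (e l) (e i) M))) →ₗ[k] A :=
  DirectSum.toModule k ι A fun l =>
    mulTensor k (cornerSpace k (e j) (e l) P) (cornerSpace k (e l) (e i) M)

/-- A Reedy algebra structure on `A`: a complete set of pairwise orthogonal idempotents
`e`, a degree function `deg`, and unital subalgebras `Ap = A⁺`, `Am = A⁻` containing the
idempotents, such that the corners of `A⁺` are upward directed and one-dimensional on the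
diagonal, the corners of `A⁻` are downward directed and one-dimensional on the diagonal, and
multiplication induces isomorphisms `⊕_l e_j A⁺ e_l ⊗ e_l A⁻ e_i ≅ e_j A e_i`. -/
structure IsReedy (k : Type*) [Field k] {A : Type*} [Ring A] [Algebra k A]
    {ι : Type*} [Fintype ι] [DecidableEq ι]
    (e : ι → A) (deg : ι → ℕ) (Ap Am : Subalgebra k A) : Prop where
  idem : ∀ i, IsIdempotentElem (e i)
  orth : ∀ i j, i ≠ j → e i * e j = 0
  complete : ∑ i, e i = 1
  memP : ∀ i, e i ∈ Ap
  memM : ∀ i, e i ∈ Am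
  diagP : ∀ i, Module.finrank k (cornerSpace k (e i) (e i) (Ap : Set A)) = 1
  offP : ∀ i j, i ≠ j → cornerSpace k (e j) (e i) (Ap : Set A) ≠ ⊥ → deg i < deg j
  diagM : ∀ i, Module.finrank k (cornerSpace k (e i) (e i) (Am : Set A)) = 1
  offM : ∀ i j, i ≠ j → cornerSpace k (e j) (e i) (Am : Set A) ≠ ⊥ → deg j < deg i
  mul_inj : ∀ i j, Function.Injective (reedyMulMap k e (Ap : Set A) (Am : Set A) j i)
  mul_range : ∀ i j, LinearMap.range (reedyMulMap k e (Ap : Set A) (Am : Set A) j i)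
      = cornerSpace k (e j) (e i) Set.univ
/-- The corner `eAe` of an algebra, as a non-unital subalgebra: the set of elements
fixed under left and right multiplication by `e`. -/
def cornerNonUnitalSubalgebra (k : Type*) [Field k] {A : Type*} [Ring A] [Algebra k A]
    (e : A) : NonUnitalSubalgebra k A where
  carrier := {x | e * x = x ∧ x * e = x}
  add_mem' := fun ha hb => ⟨by rw [mul_add, ha.1, hb.1], by rw [add_mul, ha.2, hb.2]⟩
  zero_mem' := ⟨mul_zero e, zero_mul e⟩
  mul_mem' := fun ha hb => ⟨by rw [← mul_assoc, ha.1], by rw [mul_assoc, hb.2]⟩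
  smul_mem' := fun c x hx => ⟨by rw [mul_smul_comm, hx.1], by rw [smul_mul_assoc, hx.2]⟩

/-- The corner ring `eAe` attached to an idempotent `e` of an algebra `A`. -/
def CornerRing (k : Type*) [Field k] {A : Type*} [Ring A] [Algebra k A]
    (e : {x : A // IsIdempotentElem x}) : Type _ :=
  ↥(cornerNonUnitalSubalgebra k (e : A))

instance CornerRing.instRing (k : Type*) [Field k] {A : Type*} [Ring A] [Algebra k A]
    (e : {x : A // IsIdempotentElem x}) : Ring (CornerRing k e) :=
  { (inferInstance : NonUnitalRing (cornerNonUnitalSubalgebra k (e : A))) with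
    one := ⟨(e : A), e.2, e.2⟩
    one_mul := fun x => Subtype.ext x.2.1
    mul_one := fun x => Subtype.ext x.2.2 }

instance CornerRing.instModule (k : Type*) [Field k] {A : Type*} [Ring A] [Algebra k A]
    (e : {x : A // IsIdempotentElem x}) : Module k (CornerRing k e) :=
  inferInstanceAs (Module k ↥(cornerNonUnitalSubalgebra k (e : A)))

noncomputable instance CornerRing.instAlgebra (k : Type*) [Field k] {A : Type*} [Ring A]
    [Algebra k A] (e : {x : A // IsIdempotentElem x}) : Algebra k (CornerRing k e) :=
  Algebra.ofModule
    (fun c x y => Subtype.ext (smul_mul_assoc c x.1 y.1))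
    (fun c x y => Subtype.ext (mul_smul_comm c x.1 y.1))

/-- The element of the corner ring `eAe` underlying `x : A`, given proofs. -/
def CornerRing.mk (k : Type*) [Field k] {A : Type*} [Ring A] [Algebra k A]
    (e : {x : A // IsIdempotentElem x}) (x : A) (h1 : (e : A) * x = x) (h2 : x * (e : A) = x) :
    CornerRing k e := ⟨x, h1, h2⟩

/-- A left ideal is indecomposable as a left module: nonzero and with no nontrivial
direct sum decomposition. -/
def IsIndecomposableLeftIdeal (R : Type*) [Ring R] (N : Submodule R R) : Prop :=
  N ≠ ⊥ ∧ ∀ P Q : Submodule R R, P ⊔ Q = N → Disjoint P Q → P = ⊥ ∨ Q = ⊥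

/-- A finite-dimensional `k`-algebra is elementary if its quotient by the Jacobson radical
is isomorphic to a finite product of copies of `k`. -/
def IsElementary (k : Type*) [Field k] (C : Type*) [Ring C] [Algebra k C] : Prop :=
  ∃ (m : ℕ) (φ : C →ₐ[k] (Fin m → k)), Function.Surjective φ ∧
    ∀ x, φ x = 0 ↔ x ∈ Ideal.jacobson (⊥ : Ideal C)

/-- A primitive idempotent: a nonzero idempotent that is not the sum of two nonzero
orthogonal idempotents. -/
def IsPrimitiveIdempotentElem {R : Type*} [Ring R] (e : R) : Prop :=
  IsIdempotentElem e ∧ e ≠ 0 ∧ ∀ f g : R, IsIdempotentElem f → IsIdempotentElem g →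
    f * g = 0 → g * f = 0 → e = f + g → f = 0 ∨ g = 0


section ReedyAux

variable {k : Type*} [Field k] {A : Type*} [Ring A] [Algebra k A]
variable {ι : Type*} [Fintype ι] [DecidableEq ι]
variable {e : ι → A} {deg : ι → ℕ} {Ap Am : Subalgebra k A}

theorem IsReedy.e_ne_zero [FiniteDimensional k A] (h : IsReedy k e deg Ap Am) (i : ι) :
    e i ≠ 0 := by
  intro h0
  have hb : cornerSpace k (e i) (e i) (Ap : Set A) = ⊥ := by
    rw [eq_bot_iff]
    apply Submodule.span_le.mpr
    rintro x ⟨a, _, rfl⟩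
    simp [h0]
  have := h.diagP i
  rw [hb] at this
  simp at this

theorem IsReedy.corner_diag [FiniteDimensional k A] (h : IsReedy k e deg Ap Am) (i : ι) :
    cornerSpace k (e i) (e i) (Ap : Set A) = Submodule.span k {e i} := by
  refine (Submodule.eq_of_le_of_finrank_eq ?_ ?_).symm
  · apply Submodule.span_le.mpr
    rintro x rfl
    refine Submodule.subset_span ⟨e i, h.memP i, ?_⟩
    rw [h.idem i, h.idem i]
  · rw [h.diagP i, finrank_span_singleton (h.e_ne_zero i)]

theorem IsReedy.exists_coeff [FiniteDimensional k A] (h : IsReedy k e deg Ap Am) (i : ι)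
    {x : A} (hx : x ∈ Ap) : ∃ c : k, e i * x * e i = c • e i := by
  have : e i * x * e i ∈ cornerSpace k (e i) (e i) (Ap : Set A) :=
    Submodule.subset_span ⟨x, hx, rfl⟩
  rw [h.corner_diag i] at this
  obtain ⟨c, hc⟩ := Submodule.mem_span_singleton.mp this
  exact ⟨c, hc.symm⟩

theorem IsReedy.coeff_unique [FiniteDimensional k A] (h : IsReedy k e deg Ap Am) (i : ι)
    {c d : k} (hc : c • e i = d • e i) : c = d := by
  by_contra hcd
  have : (c - d) • e i = 0 := by rw [sub_smul, hc, sub_self]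
  rcases smul_eq_zero.mp this with h1 | h1
  · exact hcd (sub_eq_zero.mp h1)
  · exact h.e_ne_zero i h1

theorem IsReedy.off' (h : IsReedy k e deg Ap Am) (i j : ι) (hne : i ≠ j)
    {x : A} (hx : x ∈ Ap) (h0 : e j * x * e i ≠ 0) : deg i < deg j := by
  apply h.offP i j hne
  intro hbot
  apply h0
  have : e j * x * e i ∈ cornerSpace k (e j) (e i) (Ap : Set A) :=
    Submodule.subset_span ⟨x, hx, rfl⟩
  rw [hbot] at this
  simpa using this

/-- Inserting `1 = ∑ e l` in the middle of a product. -/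
theorem IsReedy.insertion (h : IsReedy k e deg Ap Am) (f g x y : A) :
    f * (x * y) * g = ∑ l, (f * x * e l) * (e l * y * g) := by
  have key : ∀ l : ι, (f * x) * e l * (y * g) = (f * x * e l) * (e l * y * g) := by
    intro l
    conv_lhs => rw [← h.idem l]
    rw [show e l * e l = e l * e l from rfl]
    rw [mul_assoc (f * x), mul_assoc (e l), ← mul_assoc (f*x), ← mul_assoc (e l)]
  calc f * (x * y) * g = (f * x) * (1 : A) * (y * g) := by
        rw [mul_one]; simp only [mul_assoc]
    _ = ∑ l, (f * x) * e l * (y * g) := by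
        rw [← h.complete, Finset.mul_sum, Finset.sum_mul]
    _ = ∑ l, (f * x * e l) * (e l * y * g) := Finset.sum_congr rfl fun l _ => key l

theorem IsReedy.nilpotent [FiniteDimensional k A] (h : IsReedy k e deg Ap Am)
    {a : A} (ha : a ∈ Ap) (hdiag : ∀ i, e i * a * e i = 0) :
    a ^ (Finset.univ.sup deg + 1) = 0 := by
  have H : ∀ j i, deg j ≤ deg i → e j * a * e i = 0 := by
    intro j i hji
    rcases eq_or_ne j i with rfl | hne
    · exact hdiag j
    · by_contra h0
      exact absurd (h.off' i j (Ne.symm hne) ha h0) (by omega)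
  have C : ∀ m j i, deg j < m + deg i → e j * a ^ m * e i = 0 := by
    intro m
    induction m with
    | zero =>
      intro j i hji
      rw [pow_zero, mul_one]
      exact h.orth j i (by rintro rfl; omega)
    | succ m ih =>
      intro j i hji
      have : e j * a ^ (m + 1) * e i = ∑ l, (e j * a ^ m * e l) * (e l * a * e i) := by
        rw [pow_succ]; exact h.insertion (e j) (e i) (a ^ m) a
      rw [this]
      apply Finset.sum_eq_zero
      intro l _
      by_cases hl : deg j < m + deg l
      · rw [ih j l hl, zero_mul]
      · rw [H l i (by omega), mul_zero]
  set n := Finset.univ.sup deg + 1 with hn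
  have : a ^ n = (∑ j, e j) * a ^ n * (∑ i, e i) := by rw [h.complete, one_mul, mul_one]
  rw [this, Finset.sum_mul, Finset.sum_mul]
  apply Finset.sum_eq_zero
  intro j _
  rw [Finset.mul_sum]
  apply Finset.sum_eq_zero
  intro i _
  exact C n j i (by have : deg j ≤ Finset.univ.sup deg := Finset.le_sup (Finset.mem_univ j); omega)

theorem IsReedy.primitive [FiniteDimensional k A] (h : IsReedy k e deg Ap Am)
    (hmem : ∀ i, e i ∈ Ap) (i : ι) :
    IsPrimitiveIdempotentElem (⟨e i, hmem i⟩ : ↥Ap) := by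
  refine ⟨Subtype.ext (h.idem i), fun H => h.e_ne_zero i (congrArg Subtype.val H), ?_⟩
  intro f g hf hg hfg hgf heq
  have heq' : e i = (f : A) + g := congrArg Subtype.val heq
  have hf' : (f : A) * f = f := congrArg Subtype.val hf
  have hg' : (g : A) * g = g := congrArg Subtype.val hg
  have hfg' : (f : A) * g = 0 := congrArg Subtype.val hfg
  have hgf' : (g : A) * f = 0 := congrArg Subtype.val hgf
  have h1 : e i * (f : A) = f := by rw [heq', add_mul, hf', hgf', add_zero]
  have h2 : (f : A) * e i = f := by rw [heq', mul_add, hf', hfg', add_zero]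
  obtain ⟨c, hc⟩ := h.exists_coeff i f.2
  rw [h1, h2] at hc
  have hcc : (c * c) • e i = c • e i := by
    have := hf'
    rw [hc] at this
    rw [smul_mul_assoc, mul_smul_comm, (h.idem i : e i * e i = e i), smul_smul] at this
    exact this
  have hc2 : c * c = c := h.coeff_unique i hcc
  have : c * (c - 1) = 0 := by rw [mul_sub, hc2, mul_one, sub_self]
  rcases mul_eq_zero.mp this with h0 | h0
  · left
    exact Subtype.ext (by rw [hc, h0, zero_smul]; rfl)
  · right
    have hc1 : c = 1 := sub_eq_zero.mp h0
    have hfe : (f : A) = e i := by rw [hc, hc1, one_smul]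
    have : (g : A) = 0 := by
      have := heq'
      rw [hfe] at this
      exact (add_eq_left.mp this.symm)
    exact Subtype.ext this

set_option maxHeartbeats 1000000 in
set_option synthInstance.maxHeartbeats 400000 in
theorem IsReedy.indec [FiniteDimensional k A] (h : IsReedy k e deg Ap Am)
    (hmem : ∀ i, e i ∈ Ap) (i : ι) :
    IsIndecomposableLeftIdeal ↥Ap (Submodule.span ↥Ap ({⟨e i, hmem i⟩} : Set ↥Ap)) := by
  set ε : ↥Ap := ⟨e i, hmem i⟩ with hε
  have hidem : ε * ε = ε := Subtype.ext (h.idem i)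
  have hεne : ε ≠ 0 := fun H => h.e_ne_zero i (congrArg Subtype.val H)
  constructor
  · intro hbot
    have : ε ∈ Submodule.span ↥Ap ({ε} : Set ↥Ap) := Submodule.mem_span_singleton_self ε
    rw [hbot] at this
    exact hεne (Submodule.mem_bot _ |>.mp this)
  · intro P Q hPQ hdisj
    have hPN : P ≤ Submodule.span ↥Ap ({ε} : Set ↥Ap) := hPQ ▸ le_sup_left
    have hQN : Q ≤ Submodule.span ↥Ap ({ε} : Set ↥Ap) := hPQ ▸ le_sup_right
    have hmemN : ε ∈ P ⊔ Q := by
      rw [hPQ]; exact Submodule.mem_span_singleton_self ε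
    obtain ⟨p, hp, q, hq, hpq⟩ := Submodule.mem_sup.mp hmemN
    have hfix : ∀ x : ↥Ap, x ∈ Submodule.span ↥Ap ({ε} : Set ↥Ap) → x * ε = x := by
      intro x hx
      obtain ⟨a, ha⟩ := Submodule.mem_span_singleton.mp hx
      rw [← ha, smul_eq_mul, mul_assoc, hidem]
    have hpε : p * ε = p := hfix p (hPN hp)
    have hqε : q * ε = q := hfix q (hQN hq)
    have hp2 : p * p + p * q = p := by rw [← mul_add, hpq, hpε]
    have hq2 : q * p + q * q = q := by rw [← mul_add, hpq, hqε]
    have hppP : p * p ∈ P := by rw [← smul_eq_mul]; exact P.smul_mem p hp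
    have hpqQ : p * q ∈ Q := by rw [← smul_eq_mul]; exact Q.smul_mem p hq
    have hqpP : q * p ∈ P := by rw [← smul_eq_mul]; exact P.smul_mem q hp
    have hqqQ : q * q ∈ Q := by rw [← smul_eq_mul]; exact Q.smul_mem q hq
    have key1 : p * p - p = -(p * q) := by rw [eq_sub_of_add_eq' hp2, neg_sub]
    have key2 : q * q - q = -(q * p) := by rw [eq_sub_of_add_eq hq2, neg_sub]
    have hz1 : p * p - p = 0 := by
      have : p * p - p ∈ P ⊓ Q := ⟨P.sub_mem hppP hp, key1 ▸ Q.neg_mem hpqQ⟩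
      simpa using hdisj.le_bot this
    have hz2 : q * q - q = 0 := by
      have : q * q - q ∈ P ⊓ Q := by
        refine ⟨key2 ▸ P.neg_mem hqpP, Q.sub_mem hqqQ hq⟩
      simpa using hdisj.le_bot this
    have hpp : p * p = p := sub_eq_zero.mp hz1
    have hqq : q * q = q := sub_eq_zero.mp hz2
    have hpq0 : p * q = 0 := by
      have := key1; rw [hz1] at this; exact neg_eq_zero.mp this.symm
    have hqp0 : q * p = 0 := by
      have := key2; rw [hz2] at this; exact neg_eq_zero.mp this.symm
    rcases (h.primitive hmem i).2.2 p q hpp hqq hpq0 hqp0 hpq.symm with h0 | h0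
    · left
      rw [eq_bot_iff]
      intro x hx
      obtain ⟨a, ha⟩ := Submodule.mem_span_singleton.mp (hPN hx)
      have hxq : x ∈ Q := by
        rw [← ha, ← hpq, h0, zero_add]
        exact Q.smul_mem a hq
      exact hdisj.le_bot ⟨hx, hxq⟩
    · right
      rw [eq_bot_iff]
      intro x hx
      obtain ⟨a, ha⟩ := Submodule.mem_span_singleton.mp (hQN hx)
      have hxp : x ∈ P := by
        rw [← ha, ← hpq, h0, add_zero]
        exact P.smul_mem a hp
      exact hdisj.le_bot ⟨hxp, hx⟩

set_option maxHeartbeats 1000000 in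
set_option synthInstance.maxHeartbeats 400000 in
theorem IsReedy.noniso [FiniteDimensional k A] (h : IsReedy k e deg Ap Am)
    (hmem : ∀ i, e i ∈ Ap) (i j : ι) (hne : i ≠ j) :
    IsEmpty ((Submodule.span ↥Ap ({⟨e i, hmem i⟩} : Set ↥Ap)) ≃ₗ[↥Ap]
      (Submodule.span ↥Ap ({⟨e j, hmem j⟩} : Set ↥Ap))) := by
  constructor
  intro φ
  set εi : ↥Ap := ⟨e i, hmem i⟩ with hεi
  set εj : ↥Ap := ⟨e j, hmem j⟩ with hεj
  have hidi : εi * εi = εi := Subtype.ext (h.idem i)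
  have hidj : εj * εj = εj := Subtype.ext (h.idem j)
  set Ni := Submodule.span ↥Ap ({εi} : Set ↥Ap)
  set Nj := Submodule.span ↥Ap ({εj} : Set ↥Ap)
  have hεiN : εi ∈ Ni := Submodule.mem_span_singleton_self εi
  have hεjN : εj ∈ Nj := Submodule.mem_span_singleton_self εj
  set u' : ↥Nj := φ ⟨εi, hεiN⟩ with hu'
  set u : ↥Ap := (u' : ↥Ap) with hu
  set v' : ↥Ni := φ.symm ⟨εj, hεjN⟩ with hv'
  set v : ↥Ap := (v' : ↥Ap) with hv
  have hfix : ∀ (x : ↥Ap) (hx : x ∈ Nj), x * εj = x := by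
    intro x hx
    obtain ⟨a, ha⟩ := Submodule.mem_span_singleton.mp hx
    rw [← ha, smul_eq_mul, mul_assoc, hidj]
  have hfix' : ∀ (x : ↥Ap) (hx : x ∈ Ni), x * εi = x := by
    intro x hx
    obtain ⟨a, ha⟩ := Submodule.mem_span_singleton.mp hx
    rw [← ha, smul_eq_mul, mul_assoc, hidi]
  have huj : u * εj = u := hfix u u'.2
  have hvi : v * εi = v := hfix' v v'.2
  have hiu : εi * u = u := by
    have h1 : εi • (⟨εi, hεiN⟩ : ↥Ni) = ⟨εi, hεiN⟩ := Subtype.ext (by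
      show εi • εi = εi
      rw [smul_eq_mul, hidi])
    have h2 : εi • u' = u' := by rw [hu', ← map_smul, h1]
    have := congrArg Subtype.val h2
    rw [Submodule.coe_smul, smul_eq_mul] at this
    exact this
  have hjv : εj * v = v := by
    have h1 : εj • (⟨εj, hεjN⟩ : ↥Nj) = ⟨εj, hεjN⟩ := Subtype.ext (by
      show εj • εj = εj
      rw [smul_eq_mul, hidj])
    have h2 : εj • v' = v' := by rw [hv', ← map_smul, h1]
    have := congrArg Subtype.val h2
    rw [Submodule.coe_smul, smul_eq_mul] at this
    exact this
  have huv : u * v = εi := by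
    have h1 : u' = u • (⟨εj, hεjN⟩ : ↥Nj) := Subtype.ext (by
      show (u' : ↥Ap) = u • εj
      rw [smul_eq_mul, huj])
    have h2 : (⟨εi, hεiN⟩ : ↥Ni) = u • v' := by
      rw [hv', ← map_smul, ← h1, LinearEquiv.symm_apply_apply]
    have := congrArg Subtype.val h2
    rw [Submodule.coe_smul, smul_eq_mul] at this
    exact this.symm
  have hA : (u : A) * (v : A) = e i := congrArg Subtype.val huv
  have hu0 : (u : A) ≠ 0 := by
    intro h0
    apply h.e_ne_zero i
    rw [← hA, h0, zero_mul]
  have hv0 : (v : A) ≠ 0 := by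
    intro h0
    apply h.e_ne_zero i
    rw [← hA, h0, mul_zero]
  have hcu : e i * (u : A) * e j = (u : A) := by
    have c1 : e i * (u : A) = u := congrArg Subtype.val hiu
    have c2 : (u : A) * e j = u := congrArg Subtype.val huj
    rw [c1, c2]
  have hcv : e j * (v : A) * e i = (v : A) := by
    have c1 : e j * (v : A) = v := congrArg Subtype.val hjv
    have c2 : (v : A) * e i = v := congrArg Subtype.val hvi
    rw [c1, c2]
  have d1 : deg j < deg i := h.off' j i (Ne.symm hne) u.2 (by rw [hcu]; exact hu0)
  have d2 : deg i < deg j := h.off' i j hne v.2 (by rw [hcv]; exact hv0)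
  omega

set_option maxHeartbeats 1000000 in
set_option synthInstance.maxHeartbeats 400000 in
theorem IsReedy.elementary [FiniteDimensional k A] (h : IsReedy k e deg Ap Am) :
    IsElementary k ↥Ap := by
  classical
  have hex : ∀ (i : ι) (x : ↥Ap), ∃ c : k, e i * (x : A) * e i = c • e i :=
    fun i x => h.exists_coeff i x.2
  choose c hc using hex
  have huniq : ∀ (i : ι) (x : ↥Ap) (d : k), e i * (x : A) * e i = d • e i → c i x = d :=
    fun i x d hd => h.coeff_unique i ((hc i x).symm.trans hd)
  have hii : ∀ l, e l * e l = e l := fun l => h.idem l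
  let ψ : ι → (↥Ap →ₐ[k] k) := fun i =>
    { toFun := fun x => c i x
      map_one' := huniq i 1 1 (by
        rw [OneMemClass.coe_one, mul_one, hii i, one_smul])
      map_mul' := fun x y => huniq i (x * y) _ (by
        rw [MulMemClass.coe_mul]
        rw [h.insertion (e i) (e i) (x : A) (y : A)]
        rw [Finset.sum_eq_single i ?_ (fun hi => absurd (Finset.mem_univ i) hi)]
        · rw [hc i x, hc i y, smul_mul_assoc, mul_smul_comm, smul_smul]
          simp only [hii]
        · intro l _ hl
          by_cases h1 : e i * (x : A) * e l = 0
          · rw [h1, zero_mul]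
          · have d1 : deg l < deg i := h.off' l i hl x.2 h1
            by_cases h2 : e l * (y : A) * e i = 0
            · rw [h2, mul_zero]
            · have d2 : deg i < deg l := h.off' i l (Ne.symm hl) y.2 h2
              omega)
      map_zero' := huniq i 0 0 (by simp)
      map_add' := fun x y => huniq i (x + y) _ (by
        rw [AddMemClass.coe_add, mul_add, add_mul, hc i x, hc i y, add_smul])
      commutes' := fun r => huniq i (algebraMap k ↥Ap r) _ (by
        have h1 : ((algebraMap k ↥Ap r : ↥Ap) : A) = algebraMap k A r := rfl
        rw [h1, Algebra.algebraMap_eq_smul_one, mul_smul_comm, mul_one, smul_mul_assoc,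
          hii i]
        congr 1) }
  have hψapp : ∀ (i : ι) (x : ↥Ap), ψ i x = c i x := fun i x => rfl
  have hcdelta : ∀ l m, c l ⟨e m, h.memP m⟩ = if l = m then 1 else 0 := by
    intro l m
    apply huniq
    show e l * e m * e l = _
    rcases eq_or_ne l m with rfl | hlm
    · rw [hii l, hii l, if_pos rfl, one_smul]
    · rw [h.orth l m hlm, zero_mul, if_neg hlm, zero_smul]
  set m := Fintype.card ι with hm
  set σ := Fintype.equivFin ι with hσ
  refine ⟨m, Pi.algHom k _ (fun n => ψ (σ.symm n)), ?_, ?_⟩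
  · intro w
    refine ⟨∑ i, w (σ i) • (⟨e i, h.memP i⟩ : ↥Ap), ?_⟩
    funext n
    show ψ (σ.symm n) (∑ i, w (σ i) • (⟨e i, h.memP i⟩ : ↥Ap)) = w n
    rw [map_sum]
    have : ∀ i, ψ (σ.symm n) (w (σ i) • (⟨e i, h.memP i⟩ : ↥Ap))
        = w (σ i) * (if σ.symm n = i then 1 else 0) := by
      intro i
      rw [map_smul, hψapp, hcdelta, smul_eq_mul]
    simp_rw [this]
    simp [Finset.sum_ite_eq]
  · intro x
    constructor
    · intro hx0
      have hcx : ∀ i, c i x = 0 := by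
        intro i
        have := congrFun hx0 (σ i)
        rw [Pi.zero_apply] at this
        have h2 : ψ (σ.symm (σ i)) x = 0 := this
        rw [σ.symm_apply_apply] at h2
        exact h2
      have hdiag : ∀ i, e i * (x : A) * e i = 0 := by
        intro i
        rw [hc i x, hcx i, zero_smul]
      rw [Ideal.jacobson]
      apply Submodule.mem_sInf.mpr
      rintro J ⟨-, hJmax⟩
      by_contra hxJ
      have htop : J ⊔ Ideal.span {x} = ⊤ := by
        apply hJmax.out.2
        refine lt_of_le_of_ne le_sup_left ?_
        intro hEq
        have : x ∈ J ⊔ Ideal.span {x} :=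
          Submodule.mem_sup_right (Ideal.subset_span (Set.mem_singleton x))
        rw [← hEq] at this
        exact hxJ this
      have h1 : (1 : ↥Ap) ∈ J ⊔ Ideal.span {x} := htop ▸ Submodule.mem_top
      obtain ⟨y, hy, s, hs, hys⟩ := Submodule.mem_sup.mp h1
      obtain ⟨b, hb⟩ := Submodule.mem_span_singleton.mp hs
      set z : ↥Ap := b * x with hz
      have hdiagz : ∀ i, e i * (z : A) * e i = 0 := by
        intro i
        have hcz : c i z = 0 := by
          have := map_mul (ψ i) b x
          rw [hψapp, hψapp, hψapp] at this
          rw [hz, this, hcx i, mul_zero]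
        rw [hc i z, hcz, zero_smul]
      set n := Finset.univ.sup deg + 1 with hn
      have hnil : (z : A) ^ n = 0 := h.nilpotent z.2 hdiagz
      have hznil : z ^ n = 0 := by
        apply Subtype.ext
        rw [SubmonoidClass.coe_pow]
        exact hnil
      have hgeom : (∑ i ∈ Finset.range n, z ^ i) * ((1 : ↥Ap) - z) = 1 := by
        have hg := geom_sum_mul z n
        rw [hznil, zero_sub] at hg
        have h2 : ((1 : ↥Ap) - z) = -(z - 1) := by rw [neg_sub]
        rw [h2, mul_neg, hg, neg_neg]
      have hmJ : (1 : ↥Ap) - z ∈ J := by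
        have hsz : s = z := by rw [← hb, hz, smul_eq_mul]
        have : (1 : ↥Ap) - z = y := by rw [← hys, hsz]; abel
        rw [this]
        exact hy
      have hone : (1 : ↥Ap) ∈ J := by
        rw [← hgeom, ← smul_eq_mul]
        exact J.smul_mem _ hmJ
      exact hJmax.ne_top ((Ideal.eq_top_iff_one J).mpr hone)
    · intro hx
      funext n
      set i := σ.symm n with hi
      have hker : (RingHom.ker (ψ i).toRingHom).IsMaximal := by
        constructor
        constructor
        · intro htop
          have h1 : (1 : ↥Ap) ∈ RingHom.ker (ψ i).toRingHom := htop ▸ Submodule.mem_top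
          have h2 : (ψ i) 1 = 0 := RingHom.mem_ker.mp h1
          rw [map_one] at h2
          exact one_ne_zero h2
        · intro J hJ
          obtain ⟨y, hyJ, hyK⟩ := SetLike.exists_of_lt hJ
          have hy0 : (ψ i) y ≠ 0 := fun h0 => hyK (RingHom.mem_ker.mpr h0)
          rw [eq_top_iff]
          rintro w -
          have hwk : w - ((ψ i w) * (ψ i y)⁻¹) • y ∈ RingHom.ker (ψ i).toRingHom := by
            rw [RingHom.mem_ker]
            show (ψ i) (w - ((ψ i w) * (ψ i y)⁻¹) • y) = 0
            rw [map_sub, map_smul, smul_eq_mul, mul_assoc, inv_mul_cancel₀ hy0,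
              mul_one, sub_self]
          have hw1 : w - ((ψ i w) * (ψ i y)⁻¹) • y ∈ J := hJ.le hwk
          have hw2 : ((ψ i w) * (ψ i y)⁻¹) • y ∈ J := by
            rw [Algebra.smul_def, ← smul_eq_mul]
            exact J.smul_mem _ hyJ
          have := J.add_mem hw1 hw2
          simpa using this
      have hle : Ideal.jacobson (⊥ : Ideal ↥Ap) ≤ RingHom.ker (ψ i).toRingHom :=
        sInf_le ⟨bot_le, hker⟩
      have h2 : (ψ i) x = 0 := RingHom.mem_ker.mp (hle hx)
      show ψ i x = 0
      exact h2

end ReedyAux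

/-- For a Reedy algebra `(A, A⁺, A⁻)`, the left `A⁺`-modules `A⁺eᵢ` are
indecomposable and pairwise non-isomorphic; in particular `A⁺` is elementary with the `eᵢ`
a complete set of primitive pairwise orthogonal idempotents. -/
theorem reedy_plus_elementary
    (k : Type*) [Field k] (A : Type*) [Ring A] [Algebra k A] [FiniteDimensional k A]
    {ι : Type*} [Fintype ι] [DecidableEq ι]
    (e : ι → A) (deg : ι → ℕ) (Ap Am : Subalgebra k A)
    (h : IsReedy k e deg Ap Am) (hmem : ∀ i, e i ∈ Ap) :
    (∀ i, IsIndecomposableLeftIdeal ↥Ap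
        (Submodule.span ↥Ap ({⟨e i, hmem i⟩} : Set ↥Ap))) ∧
    (∀ i j, i ≠ j → IsEmpty
        ((Submodule.span ↥Ap ({⟨e i, hmem i⟩} : Set ↥Ap)) ≃ₗ[↥Ap]
          (Submodule.span ↥Ap ({⟨e j, hmem j⟩} : Set ↥Ap)))) ∧
    IsElementary k ↥Ap ∧
    (∀ i, IsPrimitiveIdempotentElem (⟨e i, hmem i⟩ : ↥Ap)) ∧
    (∑ i, (⟨e i, hmem i⟩ : ↥Ap)) = 1 ∧
    (∀ i j, i ≠ j → (⟨e i, hmem i⟩ : ↥Ap) * ⟨e j, hmem j⟩ = 0) := by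
  refine ⟨fun i => h.indec hmem i, fun i j hne => h.noniso hmem i j hne, h.elementary,
    fun i => h.primitive hmem i, ?_, fun i j hne => Subtype.ext (h.orth i j hne)⟩
  apply Subtype.ext
  rw [AddSubmonoidClass.coe_finset_sum, OneMemClass.coe_one]
  exact h.complete
end

section
/- The algebra B of 2×2 matrices over a field k does not admit a Reedy decomposition: there is no complete set E of pairwise orthogonal idempotents, degree function, and subalgebras B⁺, B⁻ satisfying the Reedy axioms. -/
open scoped TensorProduct DirectSum

section NotReedyAux

variable {k : Type*} [Field k] {A : Type*} [Ring A] [Algebra k A]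

/-- The linear map `x ↦ f * x * e`. -/
noncomputable def cornerProj (k : Type*) [Field k] {A : Type*} [Ring A] [Algebra k A]
    (f e : A) : A →ₗ[k] A :=
  (LinearMap.mulLeft k f).comp (LinearMap.mulRight k e)

lemma cornerProj_apply (f e x : A) : cornerProj k f e x = f * x * e := by
  simp [cornerProj, mul_assoc]

lemma cornerSpace_eq_map (f e : A) (S : Set A) :
    cornerSpace k f e S = Submodule.map (cornerProj k f e) (Submodule.span k S) := by
  have hset : {x | ∃ a ∈ S, x = f * a * e} = (cornerProj k f e) '' S := by
    ext x
    simp only [Set.mem_setOf_eq, Set.mem_image, cornerProj_apply]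
    exact ⟨fun ⟨a, ha, hx⟩ => ⟨a, ha, hx.symm⟩, fun ⟨a, ha, hx⟩ => ⟨a, ha, hx.symm⟩⟩
  rw [cornerSpace, hset, Submodule.span_image]

lemma cornerSpace_univ (f e : A) :
    cornerSpace k f e (Set.univ : Set A) = LinearMap.range (cornerProj k f e) := by
  rw [cornerSpace_eq_map, Submodule.span_univ, Submodule.map_top]

end NotReedyAux

lemma matrix_exists_mul_mul_ne_zero {k : Type*} [Field k]
    (A B : Matrix (Fin 2) (Fin 2) k) (hA : A ≠ 0) (hB : B ≠ 0) :
    ∃ x : Matrix (Fin 2) (Fin 2) k, A * x * B ≠ 0 := by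
  have hA' : ∃ a b, A a b ≠ 0 := by
    by_contra hc
    push_neg at hc
    exact hA (by ext a b; simpa using hc a b)
  have hB' : ∃ c d, B c d ≠ 0 := by
    by_contra hc
    push_neg at hc
    exact hB (by ext c d; simpa using hc c d)
  obtain ⟨a, b, hab⟩ := hA'
  obtain ⟨c, d, hcd⟩ := hB'
  refine ⟨Matrix.single b c 1, fun h0 => ?_⟩
  have hent := Matrix.ext_iff.mpr h0 a d
  rw [Matrix.mul_apply, Matrix.zero_apply] at hent
  rw [Finset.sum_eq_single c] at hent
  · rw [Matrix.mul_single_apply_same, mul_one] at hent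
    exact mul_ne_zero hab hcd hent
  · intro n _ hn
    simp [Matrix.mul_single_apply_of_ne, hn]
  · simp


lemma cornerProj_comp {k : Type*} [Field k] {A : Type*} [Ring A] [Algebra k A]
    (f e f' e' x : A) :
    cornerProj k f e (cornerProj k f' e' x) = (f * f') * x * (e' * e) := by
  simp [cornerProj_apply, mul_assoc]

/-- The total dimension of all corners `e_j B e_i` of `Mat₂ k` is `4`. -/
lemma corner_dim_total {k : Type*} [Field k] {ι : Type} [Fintype ι] [DecidableEq ι]
    (e : ι → Matrix (Fin 2) (Fin 2) k)
    (hidem : ∀ i, IsIdempotentElem (e i))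
    (horth : ∀ i j, i ≠ j → e i * e j = 0)
    (hcomp : ∑ i, e i = 1) :
    ∑ p : ι × ι, Module.finrank k
      (cornerSpace k (e p.1) (e p.2) (Set.univ : Set (Matrix (Fin 2) (Fin 2) k))) = 4 := by
  classical
  set π : ι × ι → (Matrix (Fin 2) (Fin 2) k →ₗ[k] Matrix (Fin 2) (Fin 2) k) :=
    fun p => cornerProj k (e p.1) (e p.2) with hπ
  set F : (∀ p : ι × ι, ↥(LinearMap.range (π p))) →ₗ[k] Matrix (Fin 2) (Fin 2) k :=
    ∑ p : ι × ι, (LinearMap.range (π p)).subtype ∘ₗ LinearMap.proj p with hFdef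
  have hF : ∀ v, F v = ∑ p : ι × ι, (v p : Matrix (Fin 2) (Fin 2) k) := by
    intro v
    rw [hFdef, LinearMap.sum_apply]
    rfl
  have hπ_apply : ∀ (p : ι × ι) (x), π p x = e p.1 * x * e p.2 := by
    intro p x; rw [hπ]; exact cornerProj_apply _ _ _
  have hsurj : Function.Surjective F := by
    intro x
    refine ⟨fun p => ⟨π p x, LinearMap.mem_range_self _ x⟩, ?_⟩
    rw [hF]
    have step : ∑ p : ι × ι, π p x = x := by
      rw [Fintype.sum_prod_type]
      calc ∑ j, ∑ i, π (j, i) x = ∑ j, ∑ i, (e j * x) * e i := by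
            simp only [hπ_apply]
        _ = ∑ j, (e j * x) * ∑ i, e i := by
            exact Finset.sum_congr rfl fun j _ => (Finset.mul_sum _ _ _).symm
        _ = ∑ j, e j * x := by rw [hcomp]; simp only [mul_one]
        _ = (∑ j, e j) * x := by rw [Finset.sum_mul]
        _ = x := by rw [hcomp, one_mul]
    exact step
  have hinj : Function.Injective F := by
    rw [← LinearMap.ker_eq_bot, LinearMap.ker_eq_bot']
    intro v hv
    funext p
    apply Subtype.ext
    have hπv : ∀ q : ι × ι, π p ((v q : Matrix (Fin 2) (Fin 2) k))
        = if q = p then (v q : Matrix (Fin 2) (Fin 2) k) else 0 := by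
      intro q
      obtain ⟨y, hy⟩ := (v q).2
      rw [← hy, hπ, cornerProj_comp]
      by_cases hqp : q = p
      · subst hqp
        rw [if_pos rfl, (hidem q.1), (hidem q.2), ← cornerProj_apply (k := k)]
      · rw [if_neg hqp]
        rcases (Prod.ext_iff.not.mp hqp : ¬(q.1 = p.1 ∧ q.2 = p.2)) |> not_and_or.mp with h1 | h2
        · rw [horth p.1 q.1 (fun hh => h1 hh.symm), zero_mul, zero_mul]
        · rw [horth q.2 p.2 h2, mul_zero]
    have h0 : π p (F v) = (v p : Matrix (Fin 2) (Fin 2) k) := by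
      rw [hF, map_sum, Finset.sum_congr rfl (fun q _ => hπv q)]
      simp
    rw [hv, map_zero] at h0
    simpa using h0.symm
  have hequiv : (∀ p : ι × ι, ↥(LinearMap.range (π p))) ≃ₗ[k] Matrix (Fin 2) (Fin 2) k :=
    LinearEquiv.ofBijective F ⟨hinj, hsurj⟩
  have h4 : Module.finrank k (∀ p : ι × ι, ↥(LinearMap.range (π p))) = 4 := by
    rw [hequiv.finrank_eq]
    rw [Module.finrank_matrix]
    simp
  rw [Module.finrank_pi_fintype] at h4
  rw [← h4]
  exact Finset.sum_congr rfl fun p _ => by rw [cornerSpace_univ, hπ]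

/-- The numerical core of the argument: no matrices of corner dimensions can satisfy the
Reedy constraints when the total dimension is `4`. -/
lemma reedy_numerics {ι : Type} [Fintype ι] [DecidableEq ι] (deg : ι → ℕ) (P M C : ι → ι → ℕ)
    (hPd : ∀ i, P i i = 1) (hMd : ∀ i, M i i = 1)
    (hPo : ∀ i j, i ≠ j → P j i ≠ 0 → deg i < deg j)
    (hMo : ∀ i j, i ≠ j → M j i ≠ 0 → deg j < deg i)
    (hC1 : ∀ i j, 1 ≤ C j i)
    (hPM : ∀ i j, C j i = ∑ l, P j l * M l i)
    (htot : ∑ p : ι × ι, C p.1 p.2 = 4) : False := by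
  classical
  have hcard : Fintype.card ι * Fintype.card ι ≤ 4 := by
    calc Fintype.card ι * Fintype.card ι = Fintype.card (ι × ι) := (Fintype.card_prod ι ι).symm
      _ = ∑ _p : ι × ι, 1 := by simp
      _ ≤ ∑ p : ι × ι, C p.1 p.2 := Finset.sum_le_sum fun p _ => hC1 p.2 p.1
      _ = 4 := htot
  have hne : Nonempty ι := by
    by_contra hni
    rw [not_nonempty_iff] at hni
    haveI := hni
    simp [Finset.univ_eq_empty] at htot
  have hn2 : Fintype.card ι ≤ 2 := by nlinarith [hcard]
  have hn1 : 1 ≤ Fintype.card ι := Fintype.card_pos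
  rcases (show Fintype.card ι = 1 ∨ Fintype.card ι = 2 by omega) with h1 | h2
  · obtain ⟨x, hx⟩ := Fintype.card_eq_one_iff.mp h1
    have huniv : (Finset.univ : Finset ι) = {x} := by
      ext y; simp [hx y]
    have hCxx : C x x = 1 := by
      rw [hPM, huniv, Finset.sum_singleton, hPd, hMd]
    have : ∑ p : ι × ι, C p.1 p.2 = 1 := by
      rw [Fintype.sum_prod_type, huniv, Finset.sum_singleton, Finset.sum_singleton, hCxx]
    omega
  · have hcu : (Finset.univ : Finset ι).card = 2 := by rw [Finset.card_univ]; exact h2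
    obtain ⟨a, b, hab, huniv⟩ := Finset.card_eq_two.mp hcu
    have hsum : ∀ f : ι → ℕ, ∑ l, f l = f a + f b := fun f => by
      rw [huniv, Finset.sum_pair hab]
    have key : ∀ a b : ι, a ≠ b → (∀ f : ι → ℕ, ∑ l, f l = f a + f b) →
        deg a < deg b → False := by
      intro a b hab hsum hdeg
      have hPab : P a b = 0 := by
        by_contra hne0
        exact absurd (hPo b a (Ne.symm hab) hne0) (by omega)
      have hMba : M b a = 0 := by
        by_contra hne0
        exact absurd (hMo a b hab hne0) (by omega)
      have hCaa : C a a = 1 := by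
        rw [hPM, hsum (fun l => P a l * M l a), hPd, hMd, hPab, hMba]
      have hCab : C a b = M a b := by
        rw [hPM, hsum (fun l => P a l * M l b), hPd, hMd, hPab]
        ring
      have hCba : C b a = P b a := by
        rw [hPM, hsum (fun l => P b l * M l a), hPd, hMd, hMba]
        ring
      have hCbb : C b b = P b a * M a b + 1 := by
        rw [hPM, hsum (fun l => P b l * M l b), hPd, hMd]
      have htot' : ∑ p : ι × ι, C p.1 p.2 = C a a + C a b + (C b a + C b b) := by
        rw [Fintype.sum_prod_type, hsum (fun j => ∑ i, C j i), hsum (C a), hsum (C b)]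
      rw [htot', hCaa, hCab, hCba, hCbb] at htot
      have hma : 1 ≤ M a b := by rw [← hCab]; exact hC1 b a
      have hpb : 1 ≤ P b a := by rw [← hCba]; exact hC1 a b
      have hq : 1 * 1 ≤ P b a * M a b := Nat.mul_le_mul hpb hma
      linarith
    rcases lt_trichotomy (deg a) (deg b) with hd | hd | hd
    · exact key a b hab hsum hd
    · have hPab : P a b = 0 := by
        by_contra hne0
        exact absurd (hPo b a (Ne.symm hab) hne0) (by omega)
      have hMab : M a b = 0 := by
        by_contra hne0
        exact absurd (hMo b a (Ne.symm hab) hne0) (by omega)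
      have hCab : C a b = 0 := by
        rw [hPM, hsum (fun l => P a l * M l b), hPd, hMd, hPab, hMab]
      have := hC1 b a
      omega
    · refine key b a (Ne.symm hab) (fun f => ?_) hd
      rw [hsum f]
      exact Nat.add_comm _ _

/-- The algebra of `2 × 2` matrices over a field admits no Reedy
decomposition: there is no complete set of pairwise orthogonal idempotents, degree function
and pair of subalgebras satisfying the Reedy axioms. -/
theorem matrix_two_not_reedy (k : Type*) [Field k] :
    ∀ (ι : Type) (_ : Fintype ι) (_ : DecidableEq ι)
      (e : ι → Matrix (Fin 2) (Fin 2) k) (deg : ι → ℕ)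
      (Bp Bm : Subalgebra k (Matrix (Fin 2) (Fin 2) k)),
      ¬ IsReedy k e deg Bp Bm := by
  intro ι instF instD e deg Bp Bm h
  classical
  have hfin : ∀ (f g : Matrix (Fin 2) (Fin 2) k) (S : Set (Matrix (Fin 2) (Fin 2) k)),
      Module.Finite k ↥(cornerSpace k f g S) := fun f g S => inferInstance
  -- e i ≠ 0
  have he : ∀ i, e i ≠ 0 := by
    intro i hi
    have h1 := h.diagP i
    rw [hi] at h1
    have hbot : cornerSpace k (0 : Matrix (Fin 2) (Fin 2) k) 0
        (Bp : Set (Matrix (Fin 2) (Fin 2) k)) = ⊥ := by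
      rw [cornerSpace_eq_map]
      have hz : cornerProj k (0 : Matrix (Fin 2) (Fin 2) k) 0 = 0 := by
        ext x : 1
        rw [cornerProj_apply]
        simp
      rw [hz, Submodule.map_zero]
    rw [hbot] at h1
    rw [finrank_bot] at h1
    exact one_ne_zero h1.symm
  -- dimension of each corner of the whole algebra is at least 1
  have hC1 : ∀ i j, 1 ≤ Module.finrank k
      (cornerSpace k (e j) (e i) (Set.univ : Set (Matrix (Fin 2) (Fin 2) k))) := by
    intro i j
    have hnb : cornerSpace k (e j) (e i) (Set.univ : Set (Matrix (Fin 2) (Fin 2) k)) ≠ ⊥ := by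
      obtain ⟨x, hx⟩ := matrix_exists_mul_mul_ne_zero (e j) (e i) (he j) (he i)
      intro hbot
      have hmem : e j * x * e i ∈ cornerSpace k (e j) (e i)
          (Set.univ : Set (Matrix (Fin 2) (Fin 2) k)) :=
        Submodule.subset_span ⟨x, trivial, rfl⟩
      rw [hbot, Submodule.mem_bot] at hmem
      exact hx hmem
    have : Module.finrank k
        (cornerSpace k (e j) (e i) (Set.univ : Set (Matrix (Fin 2) (Fin 2) k))) ≠ 0 :=
      fun h0 => hnb (Submodule.finrank_eq_zero.mp h0)
    omega
  -- multiplication identity for dimensions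
  have hPM : ∀ i j, Module.finrank k
        (cornerSpace k (e j) (e i) (Set.univ : Set (Matrix (Fin 2) (Fin 2) k)))
      = ∑ l, Module.finrank k (cornerSpace k (e j) (e l)
            (Bp : Set (Matrix (Fin 2) (Fin 2) k)))
          * Module.finrank k (cornerSpace k (e l) (e i)
            (Bm : Set (Matrix (Fin 2) (Fin 2) k))) := by
    intro i j
    have hr := h.mul_range i j
    have hi := h.mul_inj i j
    rw [← hr, LinearMap.finrank_range_of_inj hi, Module.finrank_directSum]
    exact Finset.sum_congr rfl fun l _ => Module.finrank_tensorProduct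
  -- total dimension
  have htot := corner_dim_total e h.idem h.orth h.complete
  -- off-diagonal degree conditions in terms of finrank
  refine reedy_numerics deg
    (fun j l => Module.finrank k (cornerSpace k (e j) (e l)
      (Bp : Set (Matrix (Fin 2) (Fin 2) k))))
    (fun l i => Module.finrank k (cornerSpace k (e l) (e i)
      (Bm : Set (Matrix (Fin 2) (Fin 2) k))))
    (fun j i => Module.finrank k (cornerSpace k (e j) (e i)
      (Set.univ : Set (Matrix (Fin 2) (Fin 2) k))))
    h.diagP h.diagM ?_ ?_ hC1 hPM htot
  · intro i j hij h0
    refine h.offP i j hij fun hbot => h0 ?_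
    show Module.finrank k
      (cornerSpace k (e j) (e i) (Bp : Set (Matrix (Fin 2) (Fin 2) k))) = 0
    rw [hbot, finrank_bot]
  · intro i j hij h0
    refine h.offM i j hij fun hbot => h0 ?_
    show Module.finrank k
      (cornerSpace k (e j) (e i) (Bm : Set (Matrix (Fin 2) (Fin 2) k))) = 0
    rw [hbot, finrank_bot]
end

section
/- Let A be a finite-dimensional k-algebra whose indecomposable projective modules P(0),…,P(n) satisfy End_A(P(i)) ≅ k for all i, and suppose there is a partial order ⊴ such that Hom_A(P(j), P(i)) ≠ 0 only if i ⊴ j. Let b be a minimal element of the partial order. Then the trace ideal J' of P(b) in A is a heredity ideal: J' is projective as a left A-module, J'·rad(A)·J' = 0, and (J')² = J'. -/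
open scoped TensorProduct DirectSum

lemma jac_mul_mem' {A : Type*} [Ring A] {x : A} (hx : x ∈ Ideal.jacobson (⊥ : Ideal A)) (a : A) :
    x * a ∈ Ideal.jacobson (⊥ : Ideal A) := by
  rw [Ideal.mem_jacobson_iff] at hx ⊢
  intro y
  obtain ⟨z, hz⟩ := hx (a * y)
  rw [Ideal.mem_bot, sub_eq_zero] at hz
  refine ⟨1 - y * x * z * a, ?_⟩
  rw [Ideal.mem_bot, sub_eq_zero]
  have h2 : (y*x) * (z * (a * y) * x + z) * a = (y*x) * 1 * a := by rw [hz]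
  calc (1 - y * x * z * a) * y * (x * a) + (1 - y * x * z * a)
      = 1 + (y*x)*1*a - (y*x) * (z * (a*y) * x + z) * a := by noncomm_ring
    _ = 1 := by rw [h2]; noncomm_ring

lemma isUnit_one_sub_jac {A : Type*} [Ring A] {j : A}
    (hj : j ∈ Ideal.jacobson (⊥ : Ideal A)) : IsUnit (1 - j) := by
  have key : ∀ {a : A}, a ∈ Ideal.jacobson (⊥ : Ideal A) → ∃ z : A, z * (1 - a) = 1 := by
    intro a ha
    obtain ⟨z, hz⟩ := Ideal.mem_jacobson_iff.mp ha (-1)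
    rw [Ideal.mem_bot, sub_eq_zero] at hz
    refine ⟨z, ?_⟩
    conv_rhs => rw [← hz]
    noncomm_ring
  obtain ⟨z, hz⟩ := key hj
  have hz' : z = 1 - -(z * j) := by
    rw [sub_neg_eq_add]
    have h3 : z - z * j = 1 := by rw [← hz]; noncomm_ring
    rw [← h3]; noncomm_ring
  obtain ⟨w, hw⟩ := key (neg_mem (Ideal.mul_mem_left _ z hj))
  rw [← hz'] at hw
  have hwe : w = 1 - j := by
    calc w = w * (z * (1 - j)) := by rw [hz, mul_one]
      _ = (w * z) * (1 - j) := by rw [mul_assoc]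
      _ = 1 - j := by rw [hw, one_mul]
  exact ⟨⟨1 - j, z, by rw [← hwe]; exact hw, hz⟩, rfl⟩

lemma jac_smul_span_singleton_le {A M : Type*} [Ring A] [AddCommGroup M] [Module A M]
    (x : M) {u : M} (hu : u ∈ (Ideal.jacobson (⊥ : Ideal A)) • (Submodule.span A {x})) :
    ∃ j ∈ Ideal.jacobson (⊥ : Ideal A), j • x = u := by
  refine Submodule.smul_induction_on hu ?_ ?_
  · rintro j hj n hn
    obtain ⟨a, rfl⟩ := Submodule.mem_span_singleton.mp hn
    exact ⟨j * a, jac_mul_mem' hj a, by rw [mul_smul]⟩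
  · rintro m n ⟨j1, hj1, rfl⟩ ⟨j2, hj2, rfl⟩
    exact ⟨j1 + j2, add_mem hj1 hj2, by rw [add_smul]⟩

lemma nakayama_noncomm {A M : Type*} [Ring A] [AddCommGroup M] [Module A M]
    [Module.Finite A M]
    (h : (⊤ : Submodule A M) ≤ (Ideal.jacobson (⊥ : Ideal A)) • (⊤ : Submodule A M)) :
    ∀ x : M, x = 0 := by
  obtain ⟨s, hs⟩ := Module.Finite.fg_top (R := A) (M := M)
  suffices H : ∀ (n : ℕ) (s : Finset M), s.card ≤ n → Submodule.span A (s : Set M) = ⊤ →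
      (⊤ : Submodule A M) = ⊥ by
    intro x
    have hb : (⊤ : Submodule A M) = ⊥ := H s.card s le_rfl hs
    have hx : x ∈ (⊤ : Submodule A M) := Submodule.mem_top
    rw [hb] at hx
    simpa using hx
  intro n
  induction n with
  | zero =>
    intro s hcard hspan
    rw [Nat.le_zero, Finset.card_eq_zero] at hcard
    subst hcard
    simpa using hspan.symm
  | succ n ih =>
    intro s hcard hspan
    classical
    rcases s.eq_empty_or_nonempty with rfl | ⟨x, hx⟩
    · simpa using hspan.symm
    · set t := s.erase x with ht
      have hins : (s : Set M) = insert x (t : Set M) := by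
        rw [ht, ← Finset.coe_insert, Finset.insert_erase hx]
      have hxmem : x ∈ Submodule.span A (t : Set M) := by
        have hxtop : x ∈ (Ideal.jacobson (⊥ : Ideal A)) •
            (Submodule.span A {x} ⊔ Submodule.span A (t : Set M)) := by
          rw [← Submodule.span_insert, ← hins, hspan]
          exact h Submodule.mem_top
        rw [Submodule.smul_sup] at hxtop
        obtain ⟨u, hu, v, hv, huv⟩ := Submodule.mem_sup.mp hxtop
        obtain ⟨j, hj, rfl⟩ := jac_smul_span_singleton_le x hu
        have hv' : v ∈ Submodule.span A (t : Set M) :=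
          Submodule.smul_le_right hv
        have hunit : IsUnit (1 - j) := isUnit_one_sub_jac hj
        obtain ⟨uu, huu⟩ := hunit
        have h1 : (1 - j) • x = v := by
          rw [sub_smul, one_smul]
          exact sub_eq_of_eq_add (by rw [add_comm]; exact huv.symm)
        have h2 : ((uu⁻¹ : Aˣ) : A) • ((1 - j) • x) = x := by
          rw [smul_smul, ← huu, Units.inv_mul, one_smul]
        rw [← h2, h1]
        exact Submodule.smul_mem _ _ hv'
      have hspan' : Submodule.span A (t : Set M) = ⊤ := by
        rw [eq_top_iff, ← hspan, hins, Submodule.span_insert, sup_le_iff]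
        exact ⟨(Submodule.span_singleton_le_iff_mem _ _).mpr hxmem, le_rfl⟩
      refine ih t ?_ hspan'
      have hlt : t.card < s.card := by
        rw [ht]; exact Finset.card_erase_lt_of_mem hx
      omega


open scoped DirectSum

section Helpers

variable {A : Type*} [Ring A] {m : ℕ} {μ : Fin m → ℕ} (P : Fin m → Type*)
  [∀ i, AddCommGroup (P i)] [∀ i, Module A (P i)]
  (Φ : A ≃ₗ[A] ⨁ i, (Fin (μ i) → P i))

/-- Projection onto the `t`-th copy of `P i` in the decomposition of `A`. -/
noncomputable def prMap (i : Fin m) (t : Fin (μ i)) : A →ₗ[A] P i :=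
  (LinearMap.proj t).comp
    ((DirectSum.component A (Fin m) (fun i => Fin (μ i) → P i) i).comp Φ.toLinearMap)

/-- Inclusion of the `t`-th copy of `P i` into `A`. -/
noncomputable def icMap (i : Fin m) (t : Fin (μ i)) : P i →ₗ[A] A :=
  Φ.symm.toLinearMap.comp
    ((DirectSum.lof A (Fin m) (fun i => Fin (μ i) → P i) i).comp
      (LinearMap.single A (fun _ : Fin (μ i) => P i) t))

/-- Inclusion of the whole `b`-isotypic component into `A`. -/
noncomputable def qMap (b : Fin m) : (Fin (μ b) → P b) →ₗ[A] A :=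
  Φ.symm.toLinearMap.comp (DirectSum.lof A (Fin m) (fun i => Fin (μ i) → P i) b)

lemma prMap_apply (i : Fin m) (t : Fin (μ i)) (a : A) :
    prMap P Φ i t a = Φ a i t := rfl

lemma prMap_icMap (i : Fin m) (t : Fin (μ i)) (p : P i) :
    prMap P Φ i t (icMap P Φ i t p) = p := by
  have h0 : Φ (icMap P Φ i t p)
      = DirectSum.lof A (Fin m) (fun i => Fin (μ i) → P i) i (Pi.single t p) :=
    Φ.apply_symm_apply _
  rw [prMap_apply, h0, DirectSum.lof_apply]
  simp

lemma prMap_surjective (i : Fin m) (t : Fin (μ i)) : Function.Surjective (prMap P Φ i t) :=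
  fun p => ⟨icMap P Φ i t p, prMap_icMap P Φ i t p⟩

lemma qMap_single (b : Fin m) (t : Fin (μ b)) (p : P b) :
    qMap P Φ b (Pi.single t p) = icMap P Φ b t p := rfl

lemma qMap_injective (b : Fin m) : Function.Injective (qMap P Φ b) := by
  intro u v huv
  have h1 : DirectSum.lof A (Fin m) (fun i => Fin (μ i) → P i) b u
      = DirectSum.lof A (Fin m) (fun i => Fin (μ i) → P i) b v := Φ.symm.injective huv
  have h2 := congrArg (DirectSum.component A (Fin m) (fun i => Fin (μ i) → P i) b) h1
  rwa [DirectSum.component.lof_self, DirectSum.component.lof_self] at h2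

variable {P} in
lemma comp_vanish {b : Fin m} (hvan : ∀ i, i ≠ b → ∀ g : P b →ₗ[A] P i, g = 0)
    (f : P b →ₗ[A] A) (i : Fin m) (hib : i ≠ b) (p : P b) :
    Φ (f p) i = 0 := by
  funext t
  have h1 := hvan i hib ((prMap P Φ i t).comp f)
  have h2 := LinearMap.ext_iff.mp h1 p
  exact h2

variable {P} in
lemma mem_range_qMap {b : Fin m} (hvan : ∀ i, i ≠ b → ∀ g : P b →ₗ[A] P i, g = 0)
    (f : P b →ₗ[A] A) (p : P b) : f p ∈ LinearMap.range (qMap P Φ b) := by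
  classical
  refine ⟨Φ (f p) b, ?_⟩
  have hw : Φ (f p) = DirectSum.lof A (Fin m) (fun i => Fin (μ i) → P i) b (Φ (f p) b) := by
    conv_lhs => rw [← DirectSum.sum_univ_of (Φ (f p))]
    rw [Finset.sum_eq_single b]
    · rfl
    · intro i _ hib
      rw [comp_vanish Φ hvan f i hib p, map_zero]
    · intro hbu
      exact absurd (Finset.mem_univ b) hbu
  show Φ.symm (DirectSum.lof A (Fin m) (fun i => Fin (μ i) → P i) b (Φ (f p) b)) = f p
  rw [← hw, Φ.symm_apply_apply]

end Helpers

open scoped Pointwise in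
/-- Let `A` be finite-dimensional with complete irredundant list of
indecomposable projectives `P i`, `End_A(P i) ≅ k`, and `Hom_A(P j, P i) ≠ 0` only if
`i ⊴ j`. If `b` is minimal, then the trace ideal `J'` of `P b` in `A` is a heredity ideal:
two-sided, projective as a left `A`-module, `J'·rad(A)·J' = 0`, and idempotent. -/
theorem trace_of_minimal_is_heredity
    (k : Type*) [Field k] (A : Type*) [Ring A] [Algebra k A] [FiniteDimensional k A]
    {m : ℕ} (P : Fin m → Type*) [∀ i, AddCommGroup (P i)] [∀ i, Module A (P i)]
    [∀ i, Module k (P i)] [∀ i, IsScalarTower k A (P i)] [∀ i, SMulCommClass A k (P i)]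
    (hproj : ∀ i, Module.Projective A (P i))
    (hcomplete : ∃ μ : Fin m → ℕ, Nonempty (A ≃ₗ[A] ⨁ i, (Fin (μ i) → P i)))
    (hirred : ∀ i j, i ≠ j → IsEmpty (P i ≃ₗ[A] P j))
    (hEnd : ∀ i (f : P i →ₗ[A] P i), ∃ c : k, f = c • LinearMap.id)
    (r : Fin m → Fin m → Prop) (hr : IsPartialOrder (Fin m) r)
    (hHom : ∀ i j, (∃ f : P j →ₗ[A] P i, f ≠ 0) → r i j)
    (b : Fin m) (hb : ∀ j, r j b → j = b) :
    ∀ J' : Ideal A, J' = (⨆ f : P b →ₗ[A] A, LinearMap.range f) →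
      (∀ x ∈ J', ∀ a : A, x * a ∈ J') ∧
      Module.Projective A J' ∧
      (∀ x ∈ J', ∀ s ∈ Ideal.jacobson (⊥ : Ideal A), ∀ y ∈ J', x * s * y = 0) ∧
      Submodule.span A ((J' : Set A) * (J' : Set A)) = J' := by
  classical
  intro J' hJ'
  obtain ⟨μ, ⟨Φ⟩⟩ := hcomplete
  -- Hom vanishing for i ≠ b, by minimality of b
  have hvan : ∀ i, i ≠ b → ∀ g : P b →ₗ[A] P i, g = 0 := by
    intro i hib g
    by_contra hg
    exact hib (hb i (hHom i b ⟨g, hg⟩))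
  -- J' is the range of qMap
  have hrange : J' = LinearMap.range (qMap P Φ b) := by
    apply le_antisymm
    · rw [hJ']
      refine iSup_le fun f => ?_
      rintro x ⟨p, rfl⟩
      exact mem_range_qMap Φ hvan f p
    · rintro x ⟨v, rfl⟩
      have hv : v = ∑ t, Pi.single t (v t) := (Finset.univ_sum_single v).symm
      rw [hv, map_sum]
      refine Submodule.sum_mem _ fun t _ => ?_
      rw [qMap_single, hJ']
      exact le_iSup (fun f : P b →ₗ[A] A => LinearMap.range f) (icMap P Φ b t) ⟨v t, rfl⟩
  -- the key annihilation property
  have hkill : ∀ (f : P b →ₗ[A] A) (p : P b) (ρ : A),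
      ρ ∈ Ideal.jacobson (⊥ : Ideal A) → f p * ρ = 0 := by
    intro f p ρ hρ
    let g : P b →ₗ[A] A :=
      { toFun := fun x => f x * ρ
        map_add' := fun u v => by
          show f (u + v) * ρ = f u * ρ + f v * ρ
          rw [map_add, add_mul]
        map_smul' := fun c u => by
          show f (c • u) * ρ = c • (f u * ρ)
          rw [map_smul, smul_eq_mul, smul_eq_mul, mul_assoc] }
    suffices hg : ∀ x, g x = 0 by exact hg p
    have hgρ : ∀ x, g x = f x * ρ := fun _ => rfl
    intro x
    have hzero : Φ (g x) = 0 := by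
      refine DFinsupp.ext fun i => ?_
      rw [DFinsupp.zero_apply]
      rcases eq_or_ne i b with rfl | hib
      · funext t
        have hψ0 : (prMap P Φ i t).comp g = 0 := by
          set ψ := (prMap P Φ i t).comp g with hψdef
          obtain ⟨c, hc⟩ := hEnd i ψ
          have hmem : ∀ w : P i, ψ w ∈ (Ideal.jacobson (⊥ : Ideal A)) •
              (⊤ : Submodule A (P i)) := by
            intro w
            have hji : f w * ρ ∈ Ideal.jacobson (⊥ : Ideal A) :=
              Ideal.mul_mem_left _ (f w) hρ
            have h5 : g w = (f w * ρ) • (1 : A) := by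
              rw [smul_eq_mul, mul_one]
              exact hgρ w
            have h6 : ψ w = (f w * ρ) • (prMap P Φ i t 1) := by
              show prMap P Φ i t (g w) = _
              rw [h5, map_smul]
            rw [h6]
            exact Submodule.smul_mem_smul hji Submodule.mem_top
          rcases eq_or_ne c 0 with rfl | hc0
          · rw [hc, zero_smul]
          · haveI : Module.Finite A (P i) :=
              Module.Finite.of_surjective (prMap P Φ i t) (prMap_surjective P Φ i t)
            have htop : (⊤ : Submodule A (P i)) ≤ (Ideal.jacobson (⊥ : Ideal A)) •
                (⊤ : Submodule A (P i)) := by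
              intro w _
              have hw : w = ψ (c⁻¹ • w) := by
                rw [hc]
                rw [LinearMap.smul_apply, LinearMap.id_apply, smul_smul,
                  mul_inv_cancel₀ hc0, one_smul]
              rw [hw]
              exact hmem _
            have hzeroall := nakayama_noncomm htop
            exact LinearMap.ext fun w => hzeroall (ψ w)
        have := LinearMap.ext_iff.mp hψ0 x
        rw [LinearMap.comp_apply, prMap_apply] at this
        exact this
      · exact comp_vanish Φ hvan g i hib x
    exact Φ.injective (by rw [hzero, map_zero])
  refine ⟨?_, ?_, ?_, ?_⟩
  · -- right ideal
    intro x hx a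
    let mr : A →ₗ[A] A :=
      { toFun := fun x => x * a
        map_add' := fun u v => add_mul u v a
        map_smul' := fun c u => mul_assoc c u a }
    let K : Submodule A A :=
      { carrier := {x | x * a ∈ J'}
        add_mem' := fun {u v} hu hv => by
          show (u + v) * a ∈ J'
          rw [add_mul]
          exact add_mem hu hv
        zero_mem' := by
          show (0 : A) * a ∈ J'
          rw [zero_mul]
          exact zero_mem J'
        smul_mem' := fun c u hu => by
          show (c • u) * a ∈ J'
          rw [smul_eq_mul, mul_assoc]
          exact J'.smul_mem c hu }
    have hK : J' ≤ K := by
      rw [hJ']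
      refine iSup_le fun f => ?_
      rintro x ⟨p, rfl⟩
      show f p * a ∈ J'
      rw [hJ']
      exact le_iSup (fun f : P b →ₗ[A] A => LinearMap.range f) (mr.comp f) ⟨p, rfl⟩
    exact hK hx
  · -- projectivity
    haveI : ∀ t : Fin (μ b), Module.Projective A (P b) := fun _ => hproj b
    haveI hPD : Module.Projective A (⨁ _ : Fin (μ b), P b) :=
      inferInstanceAs (Module.Projective A (Π₀ _ : Fin (μ b), P b))
    haveI hDb : Module.Projective A (Fin (μ b) → P b) :=
      Module.Projective.of_equiv
        (DirectSum.linearEquivFunOnFintype A (Fin (μ b)) (fun _ => P b))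
    have hJproj : Module.Projective A ↥(LinearMap.range (qMap P Φ b)) :=
      Module.Projective.of_equiv (LinearEquiv.ofInjective _ (qMap_injective P Φ b))
    rw [hrange]
    exact hJproj
  · -- J' · rad · J' = 0
    intro x hx s hs y hy
    let K : Submodule A A :=
      { carrier := {x | ∀ ρ ∈ Ideal.jacobson (⊥ : Ideal A), x * ρ = 0}
        add_mem' := fun {u v} hu hv ρ hρ => by
          rw [add_mul, hu ρ hρ, hv ρ hρ, add_zero]
        zero_mem' := fun ρ _ => zero_mul ρ
        smul_mem' := fun c u hu ρ hρ => by
          rw [smul_eq_mul, mul_assoc, hu ρ hρ, mul_zero] }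
    have hK : J' ≤ K := by
      rw [hJ']
      refine iSup_le fun f => ?_
      rintro x ⟨p, rfl⟩
      intro ρ hρ
      exact hkill f p ρ hρ
    have h1 : x * (s * y) = 0 := hK hx (s * y) (jac_mul_mem' hs y)
    rw [mul_assoc]
    exact h1
  · -- idempotency
    apply le_antisymm
    · rw [Submodule.span_le]
      rintro w hw
      obtain ⟨u, hu, v, hv, rfl⟩ := hw
      have := J'.smul_mem u hv
      rwa [smul_eq_mul] at this
    · have hle : (⨆ f : P b →ₗ[A] A, LinearMap.range f) ≤
          Submodule.span A ((J' : Set A) * (J' : Set A)) := by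
        refine iSup_le fun f => ?_
        rintro x ⟨p, rfl⟩
        obtain ⟨sec, hsec⟩ := Module.projective_def.mp (hproj b)
        have hp : Finsupp.linearCombination A (id : P b → P b) (sec p) = p := hsec p
        have hfp : f p = (sec p).sum fun z a => a * f z := by
          conv_lhs => rw [← hp, Finsupp.linearCombination_apply]
          rw [map_finsuppSum]
          refine Finsupp.sum_congr fun z _ => ?_
          rw [map_smul, smul_eq_mul, id_eq]
        rw [hfp, Finsupp.sum]
        refine Submodule.sum_mem _ fun z _ => ?_
        refine Submodule.subset_span (Set.mul_mem_mul ?_ ?_)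
        · have h2 : (sec p) z = ((Finsupp.lapply z).comp sec) p := rfl
          rw [h2, hJ']
          exact le_iSup (fun f : P b →ₗ[A] A => LinearMap.range f)
            ((Finsupp.lapply z).comp sec) ⟨p, rfl⟩
        · rw [hJ']
          exact le_iSup (fun f : P b →ₗ[A] A => LinearMap.range f) f ⟨z, rfl⟩
      calc J' = _ := hJ'
        _ ≤ _ := hle
end

section
/- If (A, A⁺, A⁻) and (B, B⁺, B⁻) are Reedy algebras over a field k, then A ⊗ₖ B is a Reedy algebra with subalgebras A⁺ ⊗ₖ B⁺ and A⁻ ⊗ₖ B⁻, idempotents eᵢ ⊗ fⱼ, and degree function deg(eᵢ ⊗ fⱼ) = deg(eᵢ) + deg(fⱼ). -/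
open scoped TensorProduct DirectSum

namespace ReedyAux

open TensorProduct LinearMap

variable (k : Type*) [Field k] {A B : Type*} [Ring A] [Algebra k A] [Ring B] [Algebra k B]

/-- Two-sided multiplication `x ↦ f * x * e` as a linear map. -/
noncomputable def Lmul (f e : A) : A →ₗ[k] A :=
  (LinearMap.mulLeft k f).comp (LinearMap.mulRight k e)

@[simp] lemma Lmul_apply (f e x : A) : Lmul k f e x = f * x * e := by
  simp [Lmul, mul_assoc]

lemma cornerSpace_eq_map (f e : A) (S : Set A) :
    cornerSpace k f e S = Submodule.map (Lmul k f e) (Submodule.span k S) := by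
  rw [Submodule.map_span, cornerSpace]
  congr 1
  ext x
  constructor
  · rintro ⟨a, ha, rfl⟩; exact ⟨a, ha, by simp⟩
  · rintro ⟨a, ha, rfl⟩; exact ⟨a, ha, by simp⟩

/-- Tensor product of two subspaces, as a subspace of the tensor product. -/
noncomputable def tSub (M : Submodule k A) (N : Submodule k B) : Submodule k (A ⊗[k] B) :=
  LinearMap.range (TensorProduct.map M.subtype N.subtype)

lemma range_tmap {M N : Type*} [AddCommMonoid M] [Module k M] [AddCommMonoid N] [Module k N]
    (u : M →ₗ[k] A) (v : N →ₗ[k] B) :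
    LinearMap.range (TensorProduct.map u v) = tSub k (LinearMap.range u) (LinearMap.range v) := by
  rw [tSub, TensorProduct.range_map_eq_span_tmul, TensorProduct.range_map_eq_span_tmul]
  congr 1
  ext t
  constructor
  · rintro ⟨m, n, rfl⟩; exact ⟨⟨u m, ⟨m, rfl⟩⟩, ⟨v n, ⟨n, rfl⟩⟩, rfl⟩
  · rintro ⟨⟨_, m, rfl⟩, ⟨_, n, rfl⟩, rfl⟩; exact ⟨m, n, rfl⟩

lemma tmap_inj {M N P Q : Type*} [AddCommGroup M] [Module k M] [AddCommGroup N] [Module k N]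
    [AddCommGroup P] [Module k P] [AddCommGroup Q] [Module k Q]
    (u : M →ₗ[k] P) (v : N →ₗ[k] Q) (hu : Function.Injective u) (hv : Function.Injective v) :
    Function.Injective (TensorProduct.map u v) := by
  rw [← LinearMap.rTensor_comp_lTensor]
  exact (Module.Flat.rTensor_preserves_injective_linearMap u hu).comp
    (Module.Flat.lTensor_preserves_injective_linearMap v hv)

lemma finrank_tSub [FiniteDimensional k A] [FiniteDimensional k B]
    (M : Submodule k A) (N : Submodule k B) :
    Module.finrank k (tSub k M N) = Module.finrank k M * Module.finrank k N := by
  rw [tSub, LinearMap.finrank_range_of_inj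
    (tmap_inj k M.subtype N.subtype M.injective_subtype N.injective_subtype),
    Module.finrank_tensorProduct]

lemma tSub_eq_bot_left (M : Submodule k A) (N : Submodule k B) (h : M = ⊥) :
    tSub k M N = ⊥ := by
  subst h
  rw [tSub, LinearMap.range_eq_bot]
  apply TensorProduct.ext'
  intro m n
  obtain ⟨x, hx⟩ := m
  obtain rfl : x = 0 := Submodule.mem_bot _ |>.mp hx
  simp

lemma tSub_eq_bot_right (M : Submodule k A) (N : Submodule k B) (h : N = ⊥) :
    tSub k M N = ⊥ := by
  subst h
  rw [tSub, LinearMap.range_eq_bot]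
  apply TensorProduct.ext'
  intro m n
  obtain ⟨x, hx⟩ := n
  obtain rfl : x = 0 := Submodule.mem_bot _ |>.mp hx
  simp

lemma Lmul_tmul (a a' : A) (b b' : B) :
    Lmul k (a ⊗ₜ[k] b) (a' ⊗ₜ[k] b') = TensorProduct.map (Lmul k a a') (Lmul k b b') := by
  apply TensorProduct.ext'
  intro x y
  simp [Algebra.TensorProduct.tmul_mul_tmul]

lemma corner_subalg (a a' : A) (S : Subalgebra k A) :
    cornerSpace k a a' (S : Set A) =
      LinearMap.range ((Lmul k a a') ∘ₗ (Subalgebra.toSubmodule S).subtype) := by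
  rw [cornerSpace_eq_map, LinearMap.range_comp, Submodule.range_subtype]
  congr 1
  rw [← Subalgebra.coe_toSubmodule, Submodule.span_eq]

lemma toLinearMap_algmap (S : Subalgebra k A) (T : Subalgebra k B) :
    (Algebra.TensorProduct.map S.val T.val).toLinearMap =
      TensorProduct.map (Subalgebra.toSubmodule S).subtype (Subalgebra.toSubmodule T).subtype := by
  apply TensorProduct.ext'
  intro s t
  rfl

lemma corner_tensor_subalg (a a' : A) (b b' : B) (S : Subalgebra k A) (T : Subalgebra k B) :
    cornerSpace k (a ⊗ₜ[k] b) (a' ⊗ₜ[k] b')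
        ((Algebra.TensorProduct.map S.val T.val).range : Set (A ⊗[k] B)) =
      tSub k (cornerSpace k a a' (S : Set A)) (cornerSpace k b b' (T : Set B)) := by
  rw [cornerSpace_eq_map]
  have h1 : ((Algebra.TensorProduct.map S.val T.val).range : Set (A ⊗[k] B)) =
      (LinearMap.range (Algebra.TensorProduct.map S.val T.val).toLinearMap : Set (A ⊗[k] B)) := rfl
  rw [h1, Submodule.span_eq, toLinearMap_algmap, ← LinearMap.range_comp, Lmul_tmul,
    ← TensorProduct.map_comp, range_tmap, corner_subalg, corner_subalg]

lemma corner_tensor_univ (a a' : A) (b b' : B) :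
    cornerSpace k (a ⊗ₜ[k] b) (a' ⊗ₜ[k] b') (Set.univ : Set (A ⊗[k] B)) =
      tSub k (cornerSpace k a a' (Set.univ : Set A)) (cornerSpace k b b' (Set.univ : Set B)) := by
  rw [cornerSpace_eq_map, Submodule.span_univ, Submodule.map_top, Lmul_tmul, range_tmap]
  rw [cornerSpace_eq_map, Submodule.span_univ, Submodule.map_top,
    cornerSpace_eq_map, Submodule.span_univ, Submodule.map_top]


section MulFactor

open DirectSum

variable {ι κ : Type*} [Fintype ι] [DecidableEq ι] [Fintype κ] [DecidableEq κ]
variable (e : ι → A) (f : κ → B) (Sp Sm : Subalgebra k A) (Tp Tm : Subalgebra k B)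

lemma mulTensor_tmul (M N : Submodule k A) (x : M) (y : N) :
    mulTensor k M N (x ⊗ₜ[k] y) = (x : A) * (y : A) := by
  simp [mulTensor, LinearMap.domRestrict₁₂_apply, LinearMap.mul_apply']

set_option maxHeartbeats 1000000 in
set_option synthInstance.maxHeartbeats 400000 in
lemma mul_factor (i j : ι × κ) :
    ∃ Ψ : ((⨁ l : ι, (↥(cornerSpace k (e j.1) (e l) (Sp : Set A)) ⊗[k]
            ↥(cornerSpace k (e l) (e i.1) (Sm : Set A)))) ⊗[k]
          (⨁ m : κ, (↥(cornerSpace k (f j.2) (f m) (Tp : Set B)) ⊗[k]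
            ↥(cornerSpace k (f m) (f i.2) (Tm : Set B))))) ≃ₗ[k]
          (⨁ p : ι × κ,
            (↥(cornerSpace k (e j.1 ⊗ₜ[k] f j.2) (e p.1 ⊗ₜ[k] f p.2)
                ((Algebra.TensorProduct.map Sp.val Tp.val).range : Set (A ⊗[k] B))) ⊗[k]
             ↥(cornerSpace k (e p.1 ⊗ₜ[k] f p.2) (e i.1 ⊗ₜ[k] f i.2)
                ((Algebra.TensorProduct.map Sm.val Tm.val).range : Set (A ⊗[k] B))))),
      ∀ z, reedyMulMap k (fun p : ι × κ => (e p.1) ⊗ₜ[k] (f p.2))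
            ((Algebra.TensorProduct.map Sp.val Tp.val).range : Set (A ⊗[k] B))
            ((Algebra.TensorProduct.map Sm.val Tm.val).range : Set (A ⊗[k] B)) j i (Ψ z)
          = TensorProduct.map (reedyMulMap k e (Sp : Set A) (Sm : Set A) j.1 i.1)
              (reedyMulMap k f (Tp : Set B) (Tm : Set B) j.2 i.2) z := by
  set P : ι → Submodule k A := fun l => cornerSpace k (e j.1) (e l) (Sp : Set A) with hP
  set M : ι → Submodule k A := fun l => cornerSpace k (e l) (e i.1) (Sm : Set A) with hM
  set Q : κ → Submodule k B := fun m => cornerSpace k (f j.2) (f m) (Tp : Set B) with hQ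
  set N : κ → Submodule k B := fun m => cornerSpace k (f m) (f i.2) (Tm : Set B) with hN
  have injP : ∀ p : ι × κ, Function.Injective
      (TensorProduct.map (P p.1).subtype (Q p.2).subtype) := fun p =>
    tmap_inj k _ _ (Submodule.injective_subtype _) (Submodule.injective_subtype _)
  have injM : ∀ p : ι × κ, Function.Injective
      (TensorProduct.map (M p.1).subtype (N p.2).subtype) := fun p =>
    tmap_inj k _ _ (Submodule.injective_subtype _) (Submodule.injective_subtype _)
  have rangeP : ∀ p : ι × κ, LinearMap.range (TensorProduct.map (P p.1).subtype (Q p.2).subtype)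
      = cornerSpace k (e j.1 ⊗ₜ[k] f j.2) (e p.1 ⊗ₜ[k] f p.2)
        ((Algebra.TensorProduct.map Sp.val Tp.val).range : Set (A ⊗[k] B)) := fun p => by
    rw [corner_tensor_subalg]; rfl
  let eqP : ∀ p : ι × κ, (↥(P p.1) ⊗[k] ↥(Q p.2)) ≃ₗ[k]
      ↥(cornerSpace k (e j.1 ⊗ₜ[k] f j.2) (e p.1 ⊗ₜ[k] f p.2)
        ((Algebra.TensorProduct.map Sp.val Tp.val).range : Set (A ⊗[k] B))) := fun p =>
    (LinearEquiv.ofInjective _ (injP p)).trans (LinearEquiv.ofEq _ _ (rangeP p))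
  have rangeM : ∀ p : ι × κ, LinearMap.range (TensorProduct.map (M p.1).subtype (N p.2).subtype)
      = cornerSpace k (e p.1 ⊗ₜ[k] f p.2) (e i.1 ⊗ₜ[k] f i.2)
        ((Algebra.TensorProduct.map Sm.val Tm.val).range : Set (A ⊗[k] B)) := fun p => by
    rw [corner_tensor_subalg]; rfl
  let eqM : ∀ p : ι × κ, (↥(M p.1) ⊗[k] ↥(N p.2)) ≃ₗ[k]
      ↥(cornerSpace k (e p.1 ⊗ₜ[k] f p.2) (e i.1 ⊗ₜ[k] f i.2)
        ((Algebra.TensorProduct.map Sm.val Tm.val).range : Set (A ⊗[k] B))) := fun p =>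
    (LinearEquiv.ofInjective _ (injM p)).trans (LinearEquiv.ofEq _ _ (rangeM p))
  let comp : ∀ p : ι × κ, ((↥(P p.1) ⊗[k] ↥(M p.1)) ⊗[k] (↥(Q p.2) ⊗[k] ↥(N p.2))) ≃ₗ[k] _ :=
    fun p => (TensorProduct.tensorTensorTensorComm k _ _ _ _).trans
      (TensorProduct.congr (eqP p) (eqM p))
  set Ψ := (TensorProduct.directSum k k (fun l => ↥(P l) ⊗[k] ↥(M l))
      (fun m => ↥(Q m) ⊗[k] ↥(N m))).trans
      (DFinsupp.mapRange.linearEquiv comp) with hΨ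
  have hFG : (reedyMulMap k (fun p : ι × κ => (e p.1) ⊗ₜ[k] (f p.2))
            ((Algebra.TensorProduct.map Sp.val Tp.val).range : Set (A ⊗[k] B))
            ((Algebra.TensorProduct.map Sm.val Tm.val).range : Set (A ⊗[k] B)) j i).comp
        Ψ.toLinearMap
      = TensorProduct.map (reedyMulMap k e (Sp : Set A) (Sm : Set A) j.1 i.1)
          (reedyMulMap k f (Tp : Set B) (Tm : Set B) j.2 i.2) := by
    apply TensorProduct.ext
    apply DirectSum.linearMap_ext
    intro l
    apply TensorProduct.ext
    apply LinearMap.ext; intro p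
    apply LinearMap.ext; intro mm
    apply DirectSum.linearMap_ext
    intro m
    apply TensorProduct.ext
    apply LinearMap.ext; intro q
    apply LinearMap.ext; intro n
    simp only [LinearMap.compr₂_apply, LinearMap.compr₂ₛₗ_apply, TensorProduct.mk_apply, LinearMap.comp_apply,
      LinearEquiv.coe_coe, LinearEquiv.coe_toLinearMap, hΨ]
    erw [LinearEquiv.trans_apply]
    rw [TensorProduct.directSum_lof_tmul_lof]
    erw [DFinsupp.mapRange.linearEquiv_apply, DFinsupp.mapRange_single]
    rw [reedyMulMap]
    erw [DirectSum.toModule_lof]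
    simp only [reedyMulMap, DirectSum.toModule_lof, TensorProduct.map_tmul,
      comp, eqP, eqM, LinearEquiv.trans_apply, TensorProduct.tensorTensorTensorComm_tmul,
      TensorProduct.congr_tmul, mulTensor_tmul, LinearEquiv.coe_ofEq_apply,
      LinearEquiv.ofInjective_apply, Submodule.coe_subtype,
      Algebra.TensorProduct.tmul_mul_tmul]
    erw [DirectSum.toModule_lof, DirectSum.toModule_lof, mulTensor_tmul, mulTensor_tmul]
  exact ⟨Ψ, fun z => by rw [← hFG]; rfl⟩

end MulFactor

end ReedyAux
set_option maxHeartbeats 2000000 in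
set_option synthInstance.maxHeartbeats 400000 in
/-- The tensor product of two Reedy algebras is Reedy, with subalgebras
`A⁺ ⊗ₖ B⁺` and `A⁻ ⊗ₖ B⁻`, idempotents `eᵢ ⊗ fⱼ`, and degrees `deg(eᵢ ⊗ fⱼ) =
deg(eᵢ) + deg(fⱼ)`. -/
theorem reedy_tensor_product
    (k : Type*) [Field k] (A B : Type*) [Ring A] [Algebra k A] [Ring B] [Algebra k B]
    [FiniteDimensional k A] [FiniteDimensional k B]
    {ι κ : Type*} [Fintype ι] [DecidableEq ι] [Fintype κ] [DecidableEq κ]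
    (e : ι → A) (degA : ι → ℕ) (Ap Am : Subalgebra k A)
    (f : κ → B) (degB : κ → ℕ) (Bp Bm : Subalgebra k B)
    (hA : IsReedy k e degA Ap Am) (hB : IsReedy k f degB Bp Bm) :
    IsReedy k (fun p : ι × κ => (e p.1) ⊗ₜ[k] (f p.2))
      (fun p : ι × κ => degA p.1 + degB p.2)
      (Algebra.TensorProduct.map Ap.val Bp.val).range
      (Algebra.TensorProduct.map Am.val Bm.val).range := by
  open ReedyAux in
  constructor
  · -- idempotents
    intro p
    show _ = _
    rw [Algebra.TensorProduct.tmul_mul_tmul, hA.idem p.1, hB.idem p.2]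
  · -- orthogonality
    intro p q hpq
    rw [Algebra.TensorProduct.tmul_mul_tmul]
    rcases eq_or_ne p.1 q.1 with h1 | h1
    · have h2 : p.2 ≠ q.2 := fun h2 => hpq (Prod.ext h1 h2)
      rw [hB.orth _ _ h2, TensorProduct.tmul_zero]
    · rw [hA.orth _ _ h1, TensorProduct.zero_tmul]
  · -- completeness
    rw [Fintype.sum_prod_type]
    simp only [← TensorProduct.tmul_sum, ← TensorProduct.sum_tmul, hA.complete, hB.complete]
    rfl
  · -- membership in A⁺ ⊗ B⁺
    intro p
    exact ⟨(⟨e p.1, hA.memP p.1⟩ : Ap) ⊗ₜ[k] (⟨f p.2, hB.memP p.2⟩ : Bp), rfl⟩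
  · -- membership in A⁻ ⊗ B⁻
    intro p
    exact ⟨(⟨e p.1, hA.memM p.1⟩ : Am) ⊗ₜ[k] (⟨f p.2, hB.memM p.2⟩ : Bm), rfl⟩
  · -- diagonal corners of A⁺ ⊗ B⁺ are one-dimensional
    intro p
    rw [corner_tensor_subalg, finrank_tSub, hA.diagP p.1, hB.diagP p.2]
  · -- off-diagonal corners of A⁺ ⊗ B⁺ raise degree
    intro p q hpq hbot
    rw [corner_tensor_subalg] at hbot
    have h1 : cornerSpace k (e q.1) (e p.1) (Ap : Set A) ≠ ⊥ :=
      fun h => hbot (tSub_eq_bot_left k _ _ h)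
    have h2 : cornerSpace k (f q.2) (f p.2) (Bp : Set B) ≠ ⊥ :=
      fun h => hbot (tSub_eq_bot_right k _ _ h)
    rcases eq_or_ne p.1 q.1 with h | h
    · have hne2 : p.2 ≠ q.2 := fun h2 => hpq (Prod.ext h h2)
      rw [h]
      exact Nat.add_lt_add_left (hB.offP _ _ hne2 h2) _
    · refine Nat.add_lt_add_of_lt_of_le (hA.offP _ _ h h1) ?_
      rcases eq_or_ne p.2 q.2 with he2 | he2
      · rw [he2]
      · exact (hB.offP _ _ he2 h2).le
  · -- diagonal corners of A⁻ ⊗ B⁻ are one-dimensional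
    intro p
    rw [corner_tensor_subalg, finrank_tSub, hA.diagM p.1, hB.diagM p.2]
  · -- off-diagonal corners of A⁻ ⊗ B⁻ lower degree
    intro p q hpq hbot
    rw [corner_tensor_subalg] at hbot
    have h1 : cornerSpace k (e q.1) (e p.1) (Am : Set A) ≠ ⊥ :=
      fun h => hbot (tSub_eq_bot_left k _ _ h)
    have h2 : cornerSpace k (f q.2) (f p.2) (Bm : Set B) ≠ ⊥ :=
      fun h => hbot (tSub_eq_bot_right k _ _ h)
    rcases eq_or_ne p.1 q.1 with h | h
    · have hne2 : p.2 ≠ q.2 := fun h2 => hpq (Prod.ext h h2)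
      rw [h]
      exact Nat.add_lt_add_left (hB.offM _ _ hne2 h2) _
    · refine Nat.add_lt_add_of_lt_of_le (hA.offM _ _ h h1) ?_
      rcases eq_or_ne p.2 q.2 with he2 | he2
      · rw [he2]
      · exact (hB.offM _ _ he2 h2).le
  · -- injectivity of the multiplication map
    intro i j
    obtain ⟨Ψ, hΨ⟩ := mul_factor k e f Ap Am Bp Bm i j
    have hG : Function.Injective (TensorProduct.map
        (reedyMulMap k e (Ap : Set A) (Am : Set A) j.1 i.1)
        (reedyMulMap k f (Bp : Set B) (Bm : Set B) j.2 i.2)) :=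
      by
        rw [← LinearMap.rTensor_comp_lTensor]
        exact (Module.Flat.rTensor_preserves_injective_linearMap _ (hA.mul_inj i.1 j.1)).comp
          (Module.Flat.lTensor_preserves_injective_linearMap _ (hB.mul_inj i.2 j.2))
    intro x y hxy
    have hx : x = Ψ (Ψ.symm x) := (Ψ.apply_symm_apply x).symm
    have hy : y = Ψ (Ψ.symm y) := (Ψ.apply_symm_apply y).symm
    rw [hx, hy, hΨ, hΨ] at hxy
    rw [hx, hy, hG hxy]
  · -- range of the multiplication map
    intro i j
    obtain ⟨Ψ, hΨ⟩ := mul_factor k e f Ap Am Bp Bm i j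
    have hrange : LinearMap.range (reedyMulMap k
          (fun p : ι × κ => (e p.1) ⊗ₜ[k] (f p.2))
          ((Algebra.TensorProduct.map Ap.val Bp.val).range : Set (A ⊗[k] B))
          ((Algebra.TensorProduct.map Am.val Bm.val).range : Set (A ⊗[k] B)) j i)
        = LinearMap.range (TensorProduct.map
            (reedyMulMap k e (Ap : Set A) (Am : Set A) j.1 i.1)
            (reedyMulMap k f (Bp : Set B) (Bm : Set B) j.2 i.2)) := by
      apply le_antisymm
      · rintro _ ⟨x, rfl⟩
        refine ⟨Ψ.symm x, ?_⟩
        rw [← hΨ (Ψ.symm x), Ψ.apply_symm_apply]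
      · rintro _ ⟨z, rfl⟩
        exact ⟨Ψ z, hΨ z⟩
    rw [hrange]
    rw [range_tmap]
    rw [hA.mul_range i.1 j.1, hB.mul_range i.2 j.2, corner_tensor_univ]
end
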